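/- For any positive integers N and k ≥ 2, the infinite series ∑_{0<m_1≤⋯≤m_k} [∏_{j=1}^{k-1} 1/(m_j+N-1)] · (1/m_k − 1/(m_k+N-1)) converges and equals the finite sum ∑_{0<m<N} 1/m^k. (The depth-one case G_{(k)}(N-1) = ζ^⋆_{<N}(k) of Kawashima's identity.) -/

import Mathlib

open Finset Filter

/-- `vW np d c = ∑_{1≤a_1≤…≤a_d≤c} ∏_j 1/(np+1-a_j)` (weights with `N = np+1`). -/
noncomputable def vW (np : ℕ) : ℕ → ℕ → ℝ
  | 0, _ => 1
  | d+1, c => ∑ a ∈ Finset.Icc 1 c, vW np d a / ((np : ℝ) + 1 - a)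

/-- `LW np e = ∑_{c=1}^{np} vW np e c / c`. -/
noncomputable def LW (np e : ℕ) : ℝ := ∑ c ∈ Finset.Icc 1 np, vW np e c / c

noncomputable def TW (N d n : ℕ) : ℝ :=
  ∑ c ∈ Finset.Icc 1 (N-1), vW (N-1) d c / ((n:ℝ) + c - 1)

noncomputable def GW (N : ℕ) : (d : ℕ) → (Fin (d+1) → ℕ) → ℝ
  | 0, m => 1/(m 0 : ℝ) - 1/((m 0 : ℝ) + (N:ℝ) - 1)
  | d+1, m => (1/((m 0 : ℝ) + (N:ℝ) - 1)) * GW N d (Fin.tail m)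

lemma GW_succ (N d : ℕ) (m : Fin (d+2) → ℕ) :
    GW N (d+1) m = (1/((m 0 : ℝ) + (N:ℝ) - 1)) * GW N d (Fin.tail m) := rfl

def CS (d n : ℕ) := {m : Fin d → ℕ // (∀ i j : Fin d, i ≤ j → m i ≤ m j) ∧ ∀ i, n ≤ m i}

lemma vW_zero (np c : ℕ) : vW np 0 c = 1 := rfl

lemma vW_succ (np d c : ℕ) :
    vW np (d+1) c = ∑ a ∈ Finset.Icc 1 c, vW np d a / ((np : ℝ) + 1 - a) := rfl

lemma vW_zero_right (np d : ℕ) : vW np (d+1) 0 = 0 := by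
  simp [vW]

lemma sum_Icc_shift (f : ℕ → ℝ) (a b : ℕ) :
    ∑ c ∈ Icc (a+1) (b+1), f c = ∑ c ∈ Icc a b, f (c+1) := by
  rw [← Finset.map_add_right_Icc a b 1, Finset.sum_map]
  rfl

/-- split off the bottom element of the chain. -/
lemma lemA : ∀ (d np c : ℕ), 1 ≤ np → 1 ≤ c →
    vW np (d+1) c = (1/(np:ℝ)) * vW np d c + vW (np-1) (d+1) (c-1) := by
  intro d
  induction d with
  | zero =>
    intro np c hnp hc
    rw [vW_succ]
    have h1 : Icc 1 c = insert 1 (Icc 2 c) := by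
      ext x; simp [Finset.mem_Icc, Finset.mem_insert]; omega
    rw [h1, Finset.sum_insert (by simp [Finset.mem_Icc])]
    have h2 : ∑ a ∈ Icc 2 c, vW np 0 a / ((np:ℝ)+1-a)
        = vW (np-1) 1 (c-1) := by
      rw [vW_succ]
      rw [show (2:ℕ) = 1 + 1 by rfl, show c = (c-1)+1 by omega, sum_Icc_shift]
      apply Finset.sum_congr rfl
      intro a _
      have hcast : ((np-1:ℕ):ℝ) = (np:ℝ) - 1 := by
        push_cast [Nat.cast_sub hnp]; ring
      rw [hcast, vW_zero, vW_zero]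
      push_cast
      ring_nf
    rw [h2, vW_zero, vW_zero]
    ring_nf
  | succ d ih =>
    intro np c hnp hc
    rw [vW_succ]
    have key : ∀ a ∈ Icc 1 c, vW np (d+1) a / ((np:ℝ)+1-a)
        = (1/(np:ℝ)) * (vW np d a / ((np:ℝ)+1-a)) + vW (np-1) (d+1) (a-1) / ((np:ℝ)+1-a) := by
      intro a ha
      rw [Finset.mem_Icc] at ha
      rw [ih np a hnp ha.1]
      ring
    rw [Finset.sum_congr rfl key, Finset.sum_add_distrib, ← Finset.mul_sum]
    have h3 : ∑ a ∈ Icc 1 c, vW (np-1) (d+1) (a-1) / ((np:ℝ)+1-a)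
        = vW (np-1) (d+1+1) (c-1) := by
      rw [vW_succ]
      have h4 : Icc 1 c = insert 1 (Icc 2 c) := by
        ext x; simp [Finset.mem_Icc, Finset.mem_insert]; omega
      rw [h4, Finset.sum_insert (by simp [Finset.mem_Icc])]
      rw [show (1:ℕ)-1 = 0 by rfl, vW_zero_right, zero_div, zero_add]
      rw [show (2:ℕ) = 1 + 1 by rfl, show c = (c-1)+1 by omega, sum_Icc_shift]
      apply Finset.sum_congr rfl
      intro a _
      have hcast : ((np-1:ℕ):ℝ) = (np:ℝ) - 1 := by
        push_cast [Nat.cast_sub hnp]; ring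
      rw [hcast, Nat.add_sub_cancel]
      push_cast
      ring_nf
    rw [h3, ← vW_succ]

lemma icc_tele : ∀ (b a : ℕ), 1 ≤ a → a ≤ b + 1 →
    ∑ c ∈ Icc a b, (1:ℝ)/(c*(c+1)) = 1/a - 1/(b+1) := by
  intro b
  induction b with
  | zero =>
    intro a ha hab
    have : a = 1 := by omega
    subst this
    simp
  | succ b ih =>
    intro a ha hab
    rcases Nat.lt_or_ge a (b+2) with h | h
    · rw [Finset.sum_Icc_succ_top (by omega)]
      rw [ih a ha (by omega)]
      have h1 : (0:ℝ) < (b:ℝ)+1 := by positivity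
      have h2 : (0:ℝ) < (b:ℝ)+2 := by positivity
      push_cast
      field_simp
      ring
    · have : a = b + 2 := by omega
      subst this
      rw [show Icc (b+2) (b+1) = ∅ by apply Finset.Icc_eq_empty; omega]
      push_cast
      simp
      ring_nf

lemma sum_swap_Icc (n : ℕ) (f : ℕ → ℕ → ℝ) :
    ∑ c ∈ Icc 1 n, ∑ a ∈ Icc 1 c, f a c = ∑ a ∈ Icc 1 n, ∑ c ∈ Icc a n, f a c := by
  have h1 : ∀ c ∈ Icc 1 n, ∑ a ∈ Icc 1 c, f a c
      = ∑ a ∈ Icc 1 n, if a ≤ c then f a c else 0 := by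
    intro c hc
    rw [Finset.mem_Icc] at hc
    rw [← Finset.sum_filter]
    congr 1
    ext x
    simp [Finset.mem_Icc, Finset.mem_filter]
    omega
  have h2 : ∀ a ∈ Icc 1 n, ∑ c ∈ Icc a n, f a c
      = ∑ c ∈ Icc 1 n, if a ≤ c then f a c else 0 := by
    intro a ha
    rw [Finset.mem_Icc] at ha
    rw [← Finset.sum_filter]
    congr 1
    ext x
    simp [Finset.mem_Icc, Finset.mem_filter]
    omega
  rw [Finset.sum_congr rfl h1, Finset.sum_congr rfl h2, Finset.sum_comm]

lemma lemB : ∀ (e n : ℕ), 1 ≤ n → LW n e - LW (n-1) e = 1/(n:ℝ)^(e+1) := by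
  intro e
  induction e with
  | zero =>
    intro n hn
    obtain ⟨m, rfl⟩ : ∃ m, n = m+1 := ⟨n-1, by omega⟩
    unfold LW
    simp only [vW_zero, Nat.add_sub_cancel]
    rw [Finset.sum_Icc_succ_top (by omega)]
    push_cast
    ring
  | succ e ih =>
    intro n hn
    obtain ⟨m, rfl⟩ : ∃ m, n = m+1 := ⟨n-1, by omega⟩
    simp only [Nat.add_sub_cancel] at ih ⊢
    have hn0 : ((m:ℝ)+1) ≠ 0 := by positivity
    have hstep : LW (m+1) (e+1) = (1/((m:ℝ)+1)) * LW (m+1) e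
        + ∑ c ∈ Icc 1 m, vW m (e+1) c / ((c:ℝ)+1) := by
      unfold LW
      have key : ∀ c ∈ Icc 1 (m+1), vW (m+1) (e+1) c / c
          = (1/((m:ℝ)+1)) * (vW (m+1) e c / c) + vW m (e+1) (c-1) / c := by
        intro c hc
        rw [Finset.mem_Icc] at hc
        have := lemA e (m+1) c (by omega) hc.1
        simp only [Nat.add_sub_cancel] at this
        rw [this]
        push_cast
        ring
      rw [Finset.sum_congr rfl key, Finset.sum_add_distrib, ← Finset.mul_sum]
      congr 1
      rw [show (1:ℕ) = 0+1 by rfl, sum_Icc_shift]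
      rw [show Icc 0 m = insert 0 (Icc 1 m) by ext x; simp [Finset.mem_Icc]; omega]
      rw [Finset.sum_insert (by simp)]
      rw [show (0:ℕ)+1-1 = 0 by rfl, vW_zero_right, zero_div, zero_add]
      apply Finset.sum_congr rfl
      intro c _
      rw [Nat.add_sub_cancel]
      push_cast
      ring_nf
    have hsecond : ∑ c ∈ Icc 1 m, vW m (e+1) c / ((c:ℝ)+1)
        - LW m (e+1) = -(1/((m:ℝ)+1)) * LW m e := by
      unfold LW
      rw [← Finset.sum_sub_distrib]
      have key2 : ∀ c ∈ Icc 1 m,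
          vW m (e+1) c / ((c:ℝ)+1) - vW m (e+1) c / c
          = ∑ a ∈ Icc 1 c, (-(vW m e a / ((m:ℝ)+1-a))) * (1/((c:ℝ)*((c:ℝ)+1))) := by
        intro c hc
        rw [Finset.mem_Icc] at hc
        have hc1 : (1:ℝ) ≤ (c:ℝ) := by exact_mod_cast hc.1
        rw [vW_succ, Finset.sum_div, Finset.sum_div, ← Finset.sum_sub_distrib]
        apply Finset.sum_congr rfl
        intro a ha
        rw [Finset.mem_Icc] at ha
        have hc0 : (0:ℝ) < (c:ℝ) := by linarith
        have hna : ((m:ℝ)+1-(a:ℝ)) ≠ 0 := by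
          have : (a:ℝ) ≤ (m:ℝ) := by
            exact_mod_cast le_trans ha.2 hc.2
          intro h; nlinarith
        field_simp
        ring
      rw [Finset.sum_congr rfl key2]
      rw [sum_swap_Icc m (fun a c => (-(vW m e a / ((m:ℝ)+1-a))) * (1/((c:ℝ)*((c:ℝ)+1))))]
      have key3 : ∀ a ∈ Icc 1 m,
          ∑ c ∈ Icc a m, (-(vW m e a / ((m:ℝ)+1-a))) * (1/((c:ℝ)*((c:ℝ)+1)))
          = -(1/((m:ℝ)+1)) * (vW m e a / a) := by
        intro a ha
        rw [Finset.mem_Icc] at ha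
        rw [← Finset.mul_sum, icc_tele m a ha.1 (by omega)]
        have ha1 : (1:ℝ) ≤ (a:ℝ) := by exact_mod_cast ha.1
        have ham : (a:ℝ) ≤ (m:ℝ) := by exact_mod_cast ha.2
        have hna : ((m:ℝ)+1-(a:ℝ)) ≠ 0 := by intro h; nlinarith
        have ha0 : (a:ℝ) ≠ 0 := by positivity
        field_simp
      rw [Finset.sum_congr rfl key3, ← Finset.mul_sum]
    have := ih (m+1) (by omega)
    simp only [Nat.add_sub_cancel] at this
    have goal : LW (m+1) (e+1) - LW m (e+1)
        = (1/((m:ℝ)+1)) * (LW (m+1) e - LW m e) := by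
      rw [hstep]
      have h2 : ∑ c ∈ Icc 1 m, vW m (e+1) c / ((c:ℝ)+1)
          = LW m (e+1) + (-(1/((m:ℝ)+1)) * LW m e) := by linarith [hsecond]
      rw [h2]
      ring
    rw [goal, this]
    push_cast
    field_simp
    ring

lemma aux_tendsto_zero (a x : ℕ) :
    Tendsto (fun n : ℕ => 1/((a:ℝ)+((n+x : ℕ) : ℝ))) atTop (nhds 0) := by
  have h1 : Tendsto (fun n : ℕ => (a:ℝ)+((n+x:ℕ):ℝ)) atTop atTop := by
    push_cast
    apply tendsto_atTop_add_const_left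
    apply tendsto_atTop_add_const_right
    exact tendsto_natCast_atTop_atTop
  simp only [one_div]
  exact h1.inv_tendsto_atTop

/-- Telescoping series: `∑_{j≥0} (1/(a+j) - 1/(a+j+p)) = ∑_{i<p} 1/(a+i)`. -/
lemma tele_hasSum (a p : ℕ) (ha : 1 ≤ a) :
    HasSum (fun j : ℕ => 1/((a:ℝ)+j) - 1/((a:ℝ)+j+p))
      (∑ i ∈ Finset.range p, 1/((a:ℝ)+i)) := by
  set g : ℕ → ℝ := fun j => 1/((a:ℝ)+j) with hg
  set f : ℕ → ℝ := fun j => g j - g (j + p) with hf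
  have hpos : ∀ j : ℕ, (0:ℝ) < (a:ℝ)+j := by
    intro j
    have : (1:ℝ) ≤ (a:ℝ) := by exact_mod_cast ha
    positivity
  have hfeq : ∀ j : ℕ, f j = 1/((a:ℝ)+j) - 1/((a:ℝ)+j+p) := by
    intro j; simp only [hf, hg]; push_cast; ring_nf
  have hfnn : ∀ j, 0 ≤ f j := by
    intro j
    have h2 : ((a:ℝ)+j) ≤ ((a:ℝ)+((j+p:ℕ):ℝ)) := by
      push_cast
      have : (0:ℝ) ≤ (p:ℝ) := by positivity
      linarith
    have := one_div_le_one_div_of_le (hpos j) h2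
    simp only [hf, hg]
    linarith
  have hP : ∀ n : ℕ, ∑ j ∈ range n, f j = ∑ i ∈ range p, g i - ∑ x ∈ range p, g (n + x) := by
    intro n
    have h1 : ∑ j ∈ range n, g (j + p) = ∑ j ∈ range (p + n), g j - ∑ j ∈ range p, g j := by
      rw [sum_range_add g p n]
      have : ∀ j, g (p + j) = g (j + p) := by intro j; congr 1; omega
      simp only [this]
      ring
    have h2 : ∑ j ∈ range (p + n), g j = ∑ j ∈ range n, g j + ∑ x ∈ range p, g (n + x) := by
      rw [show p + n = n + p by omega, sum_range_add g n p]
    simp only [hf, sum_sub_distrib, h1, h2]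
    ring
  have htend : Tendsto (fun n => ∑ j ∈ range n, f j) atTop
      (nhds (∑ i ∈ range p, g i)) := by
    rw [show nhds (∑ i ∈ range p, g i) = nhds (∑ i ∈ range p, g i - 0) by rw [sub_zero]]
    simp only [hP]
    apply Tendsto.sub tendsto_const_nhds
    have : Tendsto (fun n : ℕ => ∑ x ∈ range p, g (n + x)) atTop (nhds (∑ x ∈ range p, (0:ℝ))) := by
      apply tendsto_finset_sum
      intro x _
      exact aux_tendsto_zero a x
    simpa using this
  have hsummable : Summable f := by
    apply summable_of_sum_range_le hfnn
    intro n
    rw [hP n]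
    have hnn : 0 ≤ ∑ x ∈ range p, g (n + x) := by
      apply sum_nonneg; intro x _
      have := hpos (n + x)
      simp only [hg]
      positivity
    linarith
  have h := hsummable.hasSum
  have heq := tendsto_nhds_unique (h.tendsto_sum_nat) htend
  rw [heq] at h
  have : (fun j : ℕ => 1/((a:ℝ)+j) - 1/((a:ℝ)+j+p)) = f := funext fun j => (hfeq j).symm
  rw [this]
  exact h

lemma lemC : ∀ (n e : ℕ), LW n e = ∑ m ∈ Icc 1 n, 1/(m:ℝ)^(e+1) := by
  intro n
  induction n with
  | zero => intro e; simp [LW]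
  | succ n ih =>
    intro e
    have h := lemB e (n+1) (by omega)
    simp only [Nat.add_sub_cancel] at h
    rw [Finset.sum_Icc_succ_top (by omega), ← ih e]
    push_cast at h ⊢
    linarith

lemma sum_Icc_one_eq_range (p : ℕ) (f : ℕ → ℝ) :
    ∑ c ∈ Icc 1 p, f c = ∑ i ∈ range p, f (1+i) := by
  rw [show Icc 1 p = Ico 1 (p+1) by ext x; simp only [Finset.mem_Icc, Finset.mem_Ico]; omega, Finset.sum_Ico_eq_sum_range]
  simp


lemma sum_Icc_eq_range' (c N : ℕ) (f : ℕ → ℝ) (hN : 1 ≤ N) :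
    ∑ c' ∈ Icc c (N-1), f c' = ∑ i ∈ range (N-c), f (c+i) := by
  rw [show Icc c (N-1) = Ico c N by ext x; simp [Finset.mem_Icc, Finset.mem_Ico]; omega]
  rw [Finset.sum_Ico_eq_sum_range]

lemma base_hasSum (N n : ℕ) (hN : 1 ≤ N) (hn : 1 ≤ n) :
    HasSum (fun j : ℕ => 1/((n:ℝ)+j) - 1/((n:ℝ)+j+((N:ℝ)-1))) (TW N 0 n) := by
  have h := tele_hasSum n (N-1) hn
  have hcast : ((N-1:ℕ):ℝ) = (N:ℝ)-1 := by push_cast [Nat.cast_sub hN]; ring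
  rw [hcast] at h
  convert h using 1
  unfold TW
  rw [sum_Icc_one_eq_range]
  apply Finset.sum_congr rfl
  intro i _
  simp only [vW_zero]
  push_cast
  ring_nf

lemma step_hasSum (N d n : ℕ) (hN : 1 ≤ N) (hn : 1 ≤ n) :
    HasSum (fun j : ℕ => (1/((n:ℝ)+j+(N:ℝ)-1)) * TW N d (n+j)) (TW N (d+1) n) := by
  have main : HasSum
      (fun j : ℕ => ∑ c ∈ Icc 1 (N-1),
        vW (N-1) d c * ((1/((n:ℝ)+j+(N:ℝ)-1)) * (1/((n:ℝ)+j+(c:ℝ)-1))))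
      (∑ c ∈ Icc 1 (N-1),
        vW (N-1) d c * (1/((N:ℝ)-(c:ℝ))) * ∑ i ∈ range (N-c), 1/((n:ℝ)+(c:ℝ)-1+(i:ℝ))) := by
    apply hasSum_sum
    intro c hc
    rw [Finset.mem_Icc] at hc
    have hc1 : 1 ≤ n + c - 1 := by omega
    have h := (tele_hasSum (n+c-1) (N-c) hc1).mul_left
      (vW (N-1) d c * (1/((N:ℝ)-(c:ℝ))))
    have hcast1 : ((n+c-1:ℕ):ℝ) = (n:ℝ)+(c:ℝ)-1 := by
      push_cast [Nat.cast_sub (by omega : 1 ≤ n + c)]; ring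
    have hcast2 : ((N-c:ℕ):ℝ) = (N:ℝ)-(c:ℝ) := by
      push_cast [Nat.cast_sub (by omega : c ≤ N)]; ring
    rw [hcast1, hcast2] at h
    have hfn : (fun j : ℕ => vW (N-1) d c * (1/((N:ℝ)-(c:ℝ)))
          * (1/((n:ℝ)+(c:ℝ)-1+(j:ℝ)) - 1/((n:ℝ)+(c:ℝ)-1+(j:ℝ)+((N:ℝ)-(c:ℝ)))))
        = (fun j : ℕ => vW (N-1) d c * ((1/((n:ℝ)+j+(N:ℝ)-1)) * (1/((n:ℝ)+j+(c:ℝ)-1)))) := by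
      funext j
      have h1 : (1:ℝ) ≤ (n:ℝ) := by exact_mod_cast hn
      have h2 : (1:ℝ) ≤ (c:ℝ) := by exact_mod_cast hc.1
      have h3 : (0:ℝ) ≤ (j:ℝ) := by positivity
      have hcN : (c:ℝ) < (N:ℝ) := by exact_mod_cast (by omega : c < N)
      have hy : ((n:ℝ)+(j:ℝ)+(c:ℝ)-1) ≠ 0 := by nlinarith
      have hz : ((n:ℝ)+(j:ℝ)+(N:ℝ)-1) ≠ 0 := by nlinarith
      have hP : ((N:ℝ)-(c:ℝ)) ≠ 0 := by nlinarith
      have e2 : (n:ℝ)+(c:ℝ)-1+(j:ℝ)+((N:ℝ)-(c:ℝ)) = (n:ℝ)+(j:ℝ)+(N:ℝ)-1 := by ring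
      have e1 : (n:ℝ)+(c:ℝ)-1+(j:ℝ) = (n:ℝ)+(j:ℝ)+(c:ℝ)-1 := by ring
      rw [e2, e1]
      field_simp
      ring_nf
    rw [hfn] at h
    exact h
  have hfun : (fun j : ℕ => ∑ c ∈ Icc 1 (N-1),
        vW (N-1) d c * ((1/((n:ℝ)+j+(N:ℝ)-1)) * (1/((n:ℝ)+j+(c:ℝ)-1))))
      = (fun j : ℕ => (1/((n:ℝ)+j+(N:ℝ)-1)) * TW N d (n+j)) := by
    funext j
    unfold TW
    rw [Finset.mul_sum]
    apply Finset.sum_congr rfl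
    intro c _
    push_cast
    ring
  rw [hfun] at main
  convert main using 1
  -- target sum equality
  unfold TW
  have step1 : ∀ c ∈ Icc 1 (N-1),
      vW (N-1) d c * (1/((N:ℝ)-(c:ℝ))) * ∑ i ∈ range (N-c), 1/((n:ℝ)+(c:ℝ)-1+(i:ℝ))
      = ∑ c' ∈ Icc c (N-1), (vW (N-1) d c / ((N:ℝ)-(c:ℝ))) * (1/((n:ℝ)+(c':ℝ)-1)) := by
    intro c hc
    rw [Finset.mem_Icc] at hc
    rw [sum_Icc_eq_range' c N _ hN, Finset.mul_sum]
    apply Finset.sum_congr rfl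
    intro i _
    push_cast
    ring_nf
  rw [Finset.sum_congr rfl step1]
  have swap := sum_swap_Icc (N-1)
    (fun c c' => (vW (N-1) d c / ((N:ℝ)-(c:ℝ))) * (1/((n:ℝ)+(c':ℝ)-1)))
  rw [← swap]
  apply Finset.sum_congr rfl
  intro c' hc'
  rw [vW_succ, Finset.sum_div]
  apply Finset.sum_congr rfl
  intro a ha
  have hcast : ((N-1:ℕ):ℝ) = (N:ℝ)-1 := by push_cast [Nat.cast_sub hN]; ring
  rw [hcast]
  have e3 : (N:ℝ)-1+1-(a:ℝ) = (N:ℝ)-(a:ℝ) := by ring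
  rw [e3]
  ring

lemma CS_heq {D n₁ n₂ : ℕ} (h : n₁ = n₂) (x : CS D n₁) (y : CS D n₂)
    (hval : x.1 = y.1) : HEq x y := by
  subst h; exact heq_of_eq (Subtype.ext hval)

def e1 (n : ℕ) : ℕ ≃ CS 1 n where
  toFun j := ⟨fun _ => n + j, fun _ _ _ => le_rfl, fun _ => Nat.le_add_right n j⟩
  invFun m := m.1 0 - n
  left_inv j := by simp
  right_inv m := by
    apply Subtype.ext
    funext i
    have h0 : n ≤ m.1 0 := m.2.2 0
    have : i = 0 := Subsingleton.elim i 0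
    subst this
    show n + (m.1 0 - n) = m.1 0
    omega

def e2 (d n : ℕ) : (Σ j : ℕ, CS (d+1) (n+j)) ≃ CS (d+2) n where
  toFun x := ⟨Fin.cons (n + x.1) x.2.1, by
    constructor
    · intro i j hij
      cases i using Fin.cases with
      | zero =>
        cases j using Fin.cases with
        | zero => exact le_rfl
        | succ j' => exact x.2.2.2 j'
      | succ i' =>
        cases j using Fin.cases with
        | zero => exact absurd hij (by simp [Fin.le_def])
        | succ j' =>
          show x.2.1 i' ≤ x.2.1 j'
          exact x.2.2.1 i' j' (by simpa [Fin.succ_le_succ_iff] using hij)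
    · intro i
      cases i using Fin.cases with
      | zero => exact Nat.le_add_right n x.1
      | succ i' => exact le_trans (Nat.le_add_right n x.1) (x.2.2.2 i')⟩
  invFun m := ⟨m.1 0 - n, ⟨Fin.tail m.1, by
    constructor
    · intro i j hij
      exact m.2.1 i.succ j.succ (by simpa [Fin.succ_le_succ_iff] using hij)
    · intro i
      have h1 : m.1 0 ≤ m.1 i.succ := m.2.1 0 i.succ (by simp [Fin.le_def])
      have h2 : n ≤ m.1 0 := m.2.2 0
      show n + (m.1 0 - n) ≤ m.1 i.succ
      omega⟩⟩
  left_inv x := by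
    obtain ⟨j, m'⟩ := x
    apply Sigma.ext
    · show n + j - n = j
      omega
    · refine CS_heq ?_ _ _ ?_
      · show n + (n + j - n) = n + j
        omega
      · show Fin.tail ((Fin.cons (n + j) m'.1 : Fin (d+2) → ℕ)) = m'.1
        simp
  right_inv m := by
    apply Subtype.ext
    show Fin.cons (n + (m.1 0 - n)) (Fin.tail m.1) = m.1
    have h0 : n ≤ m.1 0 := m.2.2 0
    rw [show n + (m.1 0 - n) = m.1 0 by omega]
    exact Fin.cons_self_tail m.1

lemma GW_nonneg (N : ℕ) (hN : 1 ≤ N) :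
    ∀ d (m : Fin (d+1) → ℕ), (∀ i, 1 ≤ m i) → 0 ≤ GW N d m := by
  intro d
  induction d with
  | zero =>
    intro m hm
    show 0 ≤ 1/(m 0 : ℝ) - 1/((m 0 : ℝ) + (N:ℝ) - 1)
    have h1 : (1:ℝ) ≤ (m 0 : ℝ) := by exact_mod_cast hm 0
    have h2 : (1:ℝ) ≤ (N:ℝ) := by exact_mod_cast hN
    have h3 : (0:ℝ) < (m 0 : ℝ) := by linarith
    have h4 : (m 0 : ℝ) ≤ (m 0 : ℝ) + (N:ℝ) - 1 := by linarith
    have := one_div_le_one_div_of_le h3 h4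
    linarith
  | succ d ih =>
    intro m hm
    show 0 ≤ (1/((m 0 : ℝ) + (N:ℝ) - 1)) * GW N d (Fin.tail m)
    have h1 : (1:ℝ) ≤ (m 0 : ℝ) := by exact_mod_cast hm 0
    have h2 : (1:ℝ) ≤ (N:ℝ) := by exact_mod_cast hN
    have h3 : (0:ℝ) ≤ 1/((m 0 : ℝ) + (N:ℝ) - 1) := by
      apply div_nonneg (by norm_num)
      linarith
    exact mul_nonneg h3 (ih (Fin.tail m) (fun i => hm i.succ))

lemma hasSum_sigma_nonneg {β : Type*} {γ : β → Type*} {f : (Σ b, γ b) → ℝ}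
    {g : β → ℝ} {S : ℝ} (hnn : ∀ x, 0 ≤ f x)
    (hfib : ∀ b, HasSum (fun c => f ⟨b,c⟩) (g b)) (hg : HasSum g S) :
    HasSum f S := by
  have hsumm : Summable f := by
    rw [summable_sigma_of_nonneg hnn]
    refine ⟨fun b => (hfib b).summable, ?_⟩
    have : (fun b => ∑' c, f ⟨b,c⟩) = g := funext fun b => (hfib b).tsum_eq
    rw [this]
    exact hg.summable
  have h1 := hsumm.hasSum
  have h2 := h1.sigma hfib
  rwa [h2.unique hg] at h1

lemma main_hasSum (N : ℕ) (hN : 1 ≤ N) :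
    ∀ d n, 1 ≤ n → HasSum (fun m : CS (d+1) n => GW N d m.1) (TW N d n) := by
  intro d
  induction d with
  | zero =>
    intro n hn
    rw [← Equiv.hasSum_iff (e1 n)]
    have : ((fun m : CS 1 n => GW N 0 m.1) ∘ (e1 n))
        = (fun j : ℕ => 1/((n:ℝ)+j) - 1/((n:ℝ)+j+((N:ℝ)-1))) := by
      funext j
      show 1/((n + j : ℕ) : ℝ) - 1/(((n + j : ℕ) : ℝ) + (N:ℝ) - 1) = _
      push_cast
      ring_nf
    rw [this]
    exact base_hasSum N n hN hn
  | succ d ih =>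
    intro n hn
    rw [← Equiv.hasSum_iff (e2 d n)]
    apply hasSum_sigma_nonneg (g := fun j : ℕ => (1/((n:ℝ)+j+(N:ℝ)-1)) * TW N d (n+j))
    · intro x
      apply GW_nonneg N hN
      intro i
      exact le_trans hn (((e2 d n) x).2.2 i)
    · intro j
      have h := (ih (n+j) (by omega)).mul_left (1/((n:ℝ)+(j:ℝ)+(N:ℝ)-1))
      have heq : (fun c : CS (d+1) (n+j) =>
          ((fun m : CS (d+2) n => GW N (d+1) m.1) ∘ (e2 d n)) ⟨j, c⟩)
          = (fun c : CS (d+1) (n+j) => (1/((n:ℝ)+(j:ℝ)+(N:ℝ)-1)) * GW N d c.1) := by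
        funext c
        show GW N (d+1) (((e2 d n) ⟨j, c⟩).1) = _
        have hX : (((e2 d n) ⟨j, c⟩).1) = Fin.cons (n+j) c.1 := rfl
        rw [hX, GW_succ]
        rw [Fin.tail_cons]
        have h0 : (Fin.cons (n+j) c.1 : Fin (d+2) → ℕ) 0 = n + j := rfl
        rw [h0]
        push_cast
        ring_nf
      rw [heq]
      exact h
    · exact step_hasSum N d n hN hn

lemma F_eq (N : ℕ) : ∀ (d : ℕ) (m : Fin (d+1) → ℕ),
    (∏ j ∈ Finset.univ.filter (fun j : Fin (d+1) => (j : ℕ) < d),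
        (1:ℝ)/((m j:ℝ) + (N:ℝ) - 1))
      * (1/(m (Fin.last d) : ℝ) - 1/((m (Fin.last d) : ℝ) + (N:ℝ) - 1)) = GW N d m := by
  intro d
  induction d with
  | zero =>
    intro m
    have : Finset.univ.filter (fun j : Fin 1 => (j : ℕ) < 0) = ∅ := by
      ext j; simp
    rw [this]
    simp [GW, Fin.last]
  | succ d ih =>
    intro m
    rw [GW_succ, ← ih (Fin.tail m)]
    have hprod : (∏ j ∈ Finset.univ.filter (fun j : Fin (d+2) => (j : ℕ) < d+1),
        (1:ℝ)/((m j:ℝ) + (N:ℝ) - 1))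
        = (1/((m 0 : ℝ) + (N:ℝ) - 1)) *
          ∏ j ∈ Finset.univ.filter (fun j : Fin (d+1) => (j : ℕ) < d),
            (1:ℝ)/((Fin.tail m j : ℝ) + (N:ℝ) - 1) := by
      rw [Finset.prod_filter, Finset.prod_filter, Fin.prod_univ_succ]
      congr 1
      · apply Finset.prod_congr rfl
        intro j _
        have : ((j.succ : Fin (d+2)) : ℕ) = (j:ℕ) + 1 := rfl
        rw [this]
        have h2 : (if ((j:ℕ) + 1 < d + 1) then (1:ℝ)/((m j.succ : ℝ) + (N:ℝ) - 1) else 1)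
            = (if ((j:ℕ) < d) then (1:ℝ)/((m j.succ : ℝ) + (N:ℝ) - 1) else 1) := by
          apply if_congr (by omega) rfl rfl
        rw [h2]
        rfl
    rw [hprod]
    have hlast : m (Fin.last (d+1)) = Fin.tail m (Fin.last d) := by
      show m (Fin.last (d+1)) = m (Fin.last d).succ
      rw [Fin.succ_last]
    rw [hlast]
    ring

/-- The depth-one case `G_{(k)}(N-1) = ζ⋆_{<N}(k)` of Kawashima's identity: for `k ≥ 2`,
the series `∑_{0<m₁≤⋯≤m_k} [∏_{j=1}^{k-1} 1/(m_j+N-1)]·(1/m_k − 1/(m_k+N-1))` converges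
to `∑_{0<m<N} 1/m^k`. -/
theorem kawashima_depth_one (N k : ℕ) (hN : 0 < N) (hk : 2 ≤ k) :
    HasSum
      (fun m : {m : Fin k → ℕ // (∀ i j : Fin k, i ≤ j → m i ≤ m j) ∧ ∀ i, 0 < m i} =>
        (∏ j ∈ Finset.univ.filter (fun j : Fin k => (j : ℕ) < k - 1),
            (1 : ℝ) / ((m.1 j : ℝ) + (N : ℝ) - 1)) *
          (1 / (m.1 ⟨k - 1, by omega⟩ : ℝ) -
            1 / ((m.1 ⟨k - 1, by omega⟩ : ℝ) + (N : ℝ) - 1)))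
      (∑ m ∈ Finset.Ioo 0 N, (1 : ℝ) / (m : ℝ) ^ k) := by
  obtain ⟨d, rfl⟩ : ∃ d, k = d + 1 := ⟨k - 1, by omega⟩
  have h1 := main_hasSum N hN d 1 le_rfl
  have hfun : (fun m : CS (d+1) 1 => GW N d m.1)
      = (fun m : {m : Fin (d+1) → ℕ // (∀ i j : Fin (d+1), i ≤ j → m i ≤ m j) ∧ ∀ i, 0 < m i} =>
        (∏ j ∈ Finset.univ.filter (fun j : Fin (d+1) => (j : ℕ) < (d+1) - 1),
            (1 : ℝ) / ((m.1 j : ℝ) + (N : ℝ) - 1)) *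
          (1 / (m.1 ⟨(d+1) - 1, by omega⟩ : ℝ) -
            1 / ((m.1 ⟨(d+1) - 1, by omega⟩ : ℝ) + (N : ℝ) - 1))) := by
    funext m
    exact (F_eq N d m.1).symm
  rw [hfun] at h1
  have hsum : TW N d 1 = ∑ m ∈ Finset.Ioo 0 N, (1 : ℝ) / (m : ℝ) ^ (d+1) := by
    have e1 : TW N d 1 = LW (N-1) d := by
      unfold TW LW
      apply Finset.sum_congr rfl
      intro c _
      norm_num
    rw [e1, lemC]
    rw [show Finset.Ioo 0 N = Finset.Icc 1 (N-1) by ext x; simp [Finset.mem_Icc]; omega]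
  rw [hsum] at h1
  exact h1
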